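/- Let G = (V, E) be a connected, undirected, unweighted finite graph, let A be a complex matrix indexed by V with geodesic-width ω(A), and let P_A be its diagonal preconditioning matrix. If Q is a diagonal matrix with real diagonal entries such that Q − P_A is positive semidefinite (equivalently, Q(i,i) ≥ P_A(i,i) for all i ∈ V), then Q² − A* A is positive semidefinite. -/

import Mathlib

open Matrix BigOperators
open scoped ComplexOrder

/-- The closed ball `B(i, s)` of radius `s` around vertex `i` in the geodesic distance. -/
noncomputable def gball {V : Type*} [Fintype V] (G : SimpleGraph V) (i : V) (s : ℕ) :
    Finset V :=
  Finset.univ.filter fun j => G.dist i j ≤ s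

/-- The diagonal entries of the preconditioning matrix `P_A` of a matrix `A` with
geodesic-width parameter `ω`:
`P_A(i,i) = max_{k ∈ B(i,ω)} max( Σ_{j ∈ B(k,ω)} |A(j,k)|, Σ_{j ∈ B(k,ω)} |A(k,j)| )`. -/
noncomputable def precond {V : Type*} [Fintype V] (G : SimpleGraph V)
    (A : Matrix V V ℂ) (ω : ℕ) (i : V) : ℝ :=
  (gball G i ω).sup'
    ⟨i, by simp [gball, SimpleGraph.dist_self]⟩
    fun k => max (∑ j ∈ gball G k ω, ‖A j k‖)
      (∑ j ∈ gball G k ω, ‖A k j‖)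

section Aux
variable {V : Type*} [Fintype V]

lemma self_mem_gball (G : SimpleGraph V) (i : V) (s : ℕ) : i ∈ gball G i s := by
  simp [gball, SimpleGraph.dist_self]

lemma row_le_precond (G : SimpleGraph V) (A : Matrix V V ℂ) (ω : ℕ) {k j : V}
    (hk : k ∈ gball G j ω) :
    (∑ j' ∈ gball G k ω, ‖A k j'‖) ≤ precond G A ω j := by
  unfold precond
  have h1 := Finset.le_sup' (s := gball G j ω)
    (fun k => max (∑ j' ∈ gball G k ω, ‖A j' k‖)
      (∑ j' ∈ gball G k ω, ‖A k j'‖)) hk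
  exact le_trans (le_max_right _ _) h1

lemma col_le_precond (G : SimpleGraph V) (A : Matrix V V ℂ) (ω : ℕ) (j : V) :
    (∑ k ∈ gball G j ω, ‖A k j‖) ≤ precond G A ω j := by
  unfold precond
  have h1 := Finset.le_sup' (s := gball G j ω)
    (fun k => max (∑ j' ∈ gball G k ω, ‖A j' k‖)
      (∑ j' ∈ gball G k ω, ‖A k j'‖)) (self_mem_gball G j ω)
  exact le_trans (le_max_left _ _) h1

lemma precond_nonneg (G : SimpleGraph V) (A : Matrix V V ℂ) (ω : ℕ) (j : V) :
    0 ≤ precond G A ω j :=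
  le_trans (Finset.sum_nonneg fun _ _ => norm_nonneg _) (col_le_precond G A ω j)




lemma entry_zero_of_not_mem {G : SimpleGraph V} {A : Matrix V V ℂ} {ω : ℕ}
    (hω : ∀ i j, ω < G.dist i j → A i j = 0) {k j : V}
    (hj : k ∉ gball G j ω) : A k j = 0 := by
  apply hω
  simp only [gball, Finset.mem_filter, Finset.mem_univ, true_and, not_le] at hj
  rwa [SimpleGraph.dist_comm]

lemma mem_of_entry_ne {G : SimpleGraph V} {A : Matrix V V ℂ} {ω : ℕ}
    (hω : ∀ i j, ω < G.dist i j → A i j = 0) {k j : V}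
    (h : A k j ≠ 0) : k ∈ gball G j ω := by
  by_contra hc; exact h (entry_zero_of_not_mem hω hc)

lemma row_sum_eq {G : SimpleGraph V} {A : Matrix V V ℂ} {ω : ℕ}
    (hω : ∀ i j, ω < G.dist i j → A i j = 0) (k : V) :
    ∑ j, ‖A k j‖ = ∑ j ∈ gball G k ω, ‖A k j‖ := by
  symm
  apply Finset.sum_subset (Finset.subset_univ _)
  intro j _ hj
  have : A k j = 0 := by
    apply hω
    simp only [gball, Finset.mem_filter, Finset.mem_univ, true_and, not_le] at hj
    exact hj
  simp [this]

lemma col_sum_eq {G : SimpleGraph V} {A : Matrix V V ℂ} {ω : ℕ}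
    (hω : ∀ i j, ω < G.dist i j → A i j = 0) (j : V) :
    ∑ k, ‖A k j‖ = ∑ k ∈ gball G j ω, ‖A k j‖ := by
  symm
  apply Finset.sum_subset (Finset.subset_univ _)
  intro k _ hk
  simp [entry_zero_of_not_mem hω hk]

end Aux

/-- Let `G` be a connected finite graph, `A` a complex matrix indexed by the
vertices with geodesic-width at most `ω`, and `P_A` its diagonal preconditioning matrix.
If `Q` is a diagonal matrix with real diagonal entries such that `Q - P_A` is positive
semidefinite, then `Q² - Aᴴ A` is positive semidefinite. -/
theorem stmt_1 {V : Type*} [Fintype V] [DecidableEq V]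
    (G : SimpleGraph V) (hG : G.Connected)
    (A : Matrix V V ℂ) (ω : ℕ) (hω : ∀ i j, ω < G.dist i j → A i j = 0)
    (q : V → ℝ) (Q : Matrix V V ℂ)
    (hQdiag : Q = Matrix.diagonal fun i => (q i : ℂ))
    (hPSD : (Q - Matrix.diagonal fun i => ((precond G A ω i : ℝ) : ℂ)).PosSemidef) :
    (Q ^ 2 - Aᴴ * A).PosSemidef := by
  subst hQdiag
  set P : V → ℝ := precond G A ω with hP
  -- extract entrywise bound
  have hqP : ∀ i, P i ≤ q i := by
    intro i
    rw [Matrix.diagonal_sub] at hPSD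
    have h := Matrix.posSemidef_diagonal_iff.mp hPSD i
    rw [← Complex.ofReal_sub, Complex.zero_le_real, sub_nonneg] at h
    exact h
  have hq0 : ∀ i, 0 ≤ q i := fun i => le_trans (precond_nonneg G A ω i) (hqP i)
  -- the real inequality
  have key : ∀ x : V → ℂ,
      ∑ k, Complex.normSq ((A *ᵥ x) k) ≤ ∑ i, q i ^ 2 * Complex.normSq (x i) := by
    intro x
    have stepA : ∀ k, Complex.normSq ((A *ᵥ x) k) ≤
        (∑ j, ‖A k j‖) * (∑ j, ‖A k j‖ * Complex.normSq (x j)) := by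
      intro k
      have h1 : ‖(A *ᵥ x) k‖ ≤ ∑ j, ‖A k j‖ * ‖x j‖ := by
        have := norm_sum_le Finset.univ (fun j => A k j * x j)
        simpa [Matrix.mulVec, dotProduct, norm_mul] using this
      have h2 : Complex.normSq ((A *ᵥ x) k) ≤
          (∑ j, ‖A k j‖ * ‖x j‖) ^ 2 := by
        rw [← Complex.sq_norm]
        exact pow_le_pow_left₀ (norm_nonneg _) h1 2
      refine h2.trans ?_
      have := Finset.sum_mul_sq_le_sq_mul_sq Finset.univ
        (fun j => Real.sqrt (‖A k j‖))
        (fun j => Real.sqrt (‖A k j‖) * ‖x j‖)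
      calc (∑ j, ‖A k j‖ * ‖x j‖) ^ 2
          = (∑ j, Real.sqrt (‖A k j‖) *
              (Real.sqrt (‖A k j‖) * ‖x j‖)) ^ 2 := by
            congr 1; apply Finset.sum_congr rfl; intro j _
            rw [← mul_assoc, Real.mul_self_sqrt (norm_nonneg _)]
        _ ≤ (∑ j, Real.sqrt (‖A k j‖) ^ 2) *
            (∑ j, (Real.sqrt (‖A k j‖) * ‖x j‖) ^ 2) := this
        _ = (∑ j, ‖A k j‖) * (∑ j, ‖A k j‖ * Complex.normSq (x j)) := by
            congr 1
            · apply Finset.sum_congr rfl; intro j _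
              exact Real.sq_sqrt (norm_nonneg _)
            · apply Finset.sum_congr rfl; intro j _
              rw [mul_pow, Real.sq_sqrt (norm_nonneg _), Complex.sq_norm]
    calc ∑ k, Complex.normSq ((A *ᵥ x) k)
        ≤ ∑ k, (∑ j, ‖A k j‖) * (∑ j, ‖A k j‖ * Complex.normSq (x j)) :=
          Finset.sum_le_sum fun k _ => stepA k
      _ = ∑ j, (∑ k, (∑ j', ‖A k j'‖) * ‖A k j‖) * Complex.normSq (x j) := by
          simp_rw [Finset.mul_sum]
          rw [Finset.sum_comm]
          simp_rw [Finset.sum_mul]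
          apply Finset.sum_congr rfl; intro j _
          apply Finset.sum_congr rfl; intro k _
          exact Finset.sum_congr rfl fun _ _ => by ring
      _ ≤ ∑ j, q j ^ 2 * Complex.normSq (x j) := by
          apply Finset.sum_le_sum
          intro j _
          apply mul_le_mul_of_nonneg_right _ (Complex.normSq_nonneg _)
          have hterm : ∀ k, (∑ j', ‖A k j'‖) * ‖A k j‖
              ≤ P j * ‖A k j‖ := by
            intro k
            by_cases h : A k j = 0
            · simp [h]
            · apply mul_le_mul_of_nonneg_right _ (norm_nonneg _)
              rw [row_sum_eq hω k]
              exact row_le_precond G A ω (mem_of_entry_ne hω h)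
          calc ∑ k, (∑ j', ‖A k j'‖) * ‖A k j‖
              ≤ ∑ k, P j * ‖A k j‖ := Finset.sum_le_sum fun k _ => hterm k
            _ = P j * ∑ k, ‖A k j‖ := by rw [Finset.mul_sum]
            _ ≤ P j * P j := by
                apply mul_le_mul_of_nonneg_left _ (precond_nonneg G A ω j)
                rw [col_sum_eq hω j]
                exact col_le_precond G A ω j
            _ ≤ q j * q j :=
                mul_le_mul (hqP j) (hqP j) (precond_nonneg G A ω j) (hq0 j)
            _ = q j ^ 2 := (sq (q j)).symm
  rw [Matrix.posSemidef_iff_dotProduct_mulVec]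
  constructor
  · -- Hermitian
    apply Matrix.IsHermitian.sub
    · rw [sq, Matrix.diagonal_mul_diagonal]
      apply Matrix.isHermitian_diagonal_of_self_adjoint
      funext i
      simp [Complex.star_def, _root_.map_mul, Complex.conj_ofReal]
    · exact (Matrix.posSemidef_conjTranspose_mul_self A).1
  · intro x
    rw [Matrix.sub_mulVec, dotProduct_sub]
    have hT1 : star x ⬝ᵥ ((Matrix.diagonal fun i => (q i : ℂ)) ^ 2 *ᵥ x)
        = ((∑ i, q i ^ 2 * Complex.normSq (x i) : ℝ) : ℂ) := by
      rw [sq, Matrix.diagonal_mul_diagonal]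
      simp only [dotProduct, Matrix.mulVec_diagonal, Pi.star_apply]
      rw [Complex.ofReal_sum]
      apply Finset.sum_congr rfl; intro i _
      rw [Complex.star_def]
      push_cast
      rw [← Complex.mul_conj]
      ring
    have hT2 : star x ⬝ᵥ ((Aᴴ * A) *ᵥ x)
        = ((∑ k, Complex.normSq ((A *ᵥ x) k) : ℝ) : ℂ) := by
      rw [← Matrix.mulVec_mulVec, dotProduct_mulVec, ← Matrix.star_mulVec]
      simp only [dotProduct, Pi.star_apply]
      rw [Complex.ofReal_sum]
      apply Finset.sum_congr rfl; intro k _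
      rw [Complex.star_def, mul_comm, Complex.mul_conj]
    rw [hT1, hT2, ← Complex.ofReal_sub, Complex.zero_le_real, sub_nonneg]
    exact key x
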